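/- Let P_n be the path graph with vertices v_1, v_2, …, v_n (v_j adjacent to v_{j+1}), given the initial Toggle assignment in which the vertices of weight 1 are exactly v_{m_1}, v_{m_1+1}, …, v_{m_2} for some 1 ≤ m_1 < m_2 ≤ n, and all other vertices have weight 0. Then this position on P_n is penultimately unplayable. -/

import Mathlib

namespace Toggle

variable {V : Type*} [Fintype V] [DecidableEq V]

/-- The closed neighborhood `N[v]` of a vertex as a `Finset`. -/
def closedNbhd (G : SimpleGraph V) [DecidableRel G.Adj] (v : V) : Finset V :=
  insert v (G.neighborFinset v)

/-- The result of a Toggle move at `v`: flip the weight of every vertex in `N[v]`. -/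
def move (G : SimpleGraph V) [DecidableRel G.Adj] (ω : V → Bool) (v : V) : V → Bool :=
  fun u => if u ∈ closedNbhd G v then !(ω u) else ω u

/-- Total weight of a position. -/
def weight (ω : V → Bool) : ℕ := (Finset.univ.filter (fun u => ω u = true)).card

/-- Weight of a position over the closed neighborhood of `v`. -/
def nbhdWeight (G : SimpleGraph V) [DecidableRel G.Adj] (ω : V → Bool) (v : V) : ℕ :=
  ((closedNbhd G v).filter (fun u => ω u = true)).card

/-- A Toggle move at `v` is legal iff `ω v = 1` and the move strictly decreases the
weight over `N[v]`. -/
def IsLegal (G : SimpleGraph V) [DecidableRel G.Adj] (ω : V → Bool) (v : V) : Prop :=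
  ω v = true ∧ nbhdWeight G (move G ω v) v < nbhdWeight G ω v

instance (G : SimpleGraph V) [DecidableRel G.Adj] (ω : V → Bool) (v : V) :
    Decidable (IsLegal G ω v) :=
  inferInstanceAs (Decidable (ω v = true ∧ nbhdWeight G (move G ω v) v < nbhdWeight G ω v))

theorem weight_move_lt (G : SimpleGraph V) [DecidableRel G.Adj] {ω : V → Bool} {v : V}
    (h : IsLegal G ω v) : weight (move G ω v) < weight ω := by
  have key : ∀ ψ : V → Bool,
      weight ψ = ((closedNbhd G v).filter (fun u => ψ u = true)).card
        + ((Finset.univ \ closedNbhd G v).filter (fun u => ψ u = true)).card := by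
    intro ψ
    rw [weight, ← Finset.card_union_of_disjoint
      (Finset.disjoint_filter_filter Finset.disjoint_sdiff)]
    congr 1
    ext u
    simp only [Finset.mem_filter, Finset.mem_union, Finset.mem_sdiff, Finset.mem_univ,
      true_and]
    tauto
  have hout : ((Finset.univ \ closedNbhd G v).filter (fun u => move G ω v u = true))
      = ((Finset.univ \ closedNbhd G v).filter (fun u => ω u = true)) := by
    apply Finset.filter_congr
    intro u hu
    rw [Finset.mem_sdiff] at hu
    simp [move, hu.2]
  have h2 := h.2
  rw [key (move G ω v), key ω, hout]
  unfold nbhdWeight at h2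
  omega

/-- Minimal excludant of a finite set of naturals. -/
noncomputable def mex (s : Finset ℕ) : ℕ := sInf {n : ℕ | n ∉ s}

/-- The Nimber (Grundy value) of a Toggle position. -/
noncomputable def grundy (G : SimpleGraph V) [DecidableRel G.Adj] (ω : V → Bool) : ℕ :=
  mex ((Finset.univ.filter (fun v => IsLegal G ω v)).attach.image
    (fun v => grundy G (move G ω v.1)))
termination_by weight ω
decreasing_by
  have hv := v.2
  rw [Finset.mem_filter] at hv
  exact weight_move_lt G hv.2

/-- One legal Toggle move transforms `ω` into `ω'`. -/
def Step (G : SimpleGraph V) [DecidableRel G.Adj] (ω ω' : V → Bool) : Prop :=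
  ∃ v, IsLegal G ω v ∧ ω' = move G ω v

/-- `ω'` is reachable from `ω` by a (possibly empty) sequence of legal moves. -/
def Reach (G : SimpleGraph V) [DecidableRel G.Adj] (ω ω' : V → Bool) : Prop :=
  Relation.ReflTransGen (Step G) ω ω'

/-- `v` is terminally unplayable at `ω`: unplayable at `ω` and at every position
reachable from `ω`. -/
def TerminallyUnplayable (G : SimpleGraph V) [DecidableRel G.Adj] (ω : V → Bool) (v : V) :
    Prop :=
  ∀ ω', Reach G ω ω' → ¬ IsLegal G ω' v

/-- `v` is penultimately unplayable for the initial position `ω₀`: at every position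
reachable from `ω₀`, after any legal move at a vertex `u ∈ N[v]`, the vertex `v` is
terminally unplayable. -/
def PenultimatelyUnplayableAt (G : SimpleGraph V) [DecidableRel G.Adj] (ω₀ : V → Bool)
    (v : V) : Prop :=
  ∀ ω', Reach G ω₀ ω' → ∀ u ∈ closedNbhd G v, IsLegal G ω' u →
    TerminallyUnplayable G (move G ω' u) v

/-- The position `ω₀` is penultimately unplayable if every vertex is. -/
def PenultimatelyUnplayable (G : SimpleGraph V) [DecidableRel G.Adj] (ω₀ : V → Bool) :
    Prop :=
  ∀ v, PenultimatelyUnplayableAt G ω₀ v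

/-- The path graph on `Fin n`, vertices `0, 1, …, n-1` in order. -/
def pathGraph (n : ℕ) : SimpleGraph (Fin n) :=
  SimpleGraph.fromRel (fun a b => (a : ℕ) + 1 = (b : ℕ))

instance (n : ℕ) : DecidableRel (pathGraph n).Adj := fun a b =>
  decidable_of_iff _ (SimpleGraph.fromRel_adj _ a b).symm

/-- The 2×m grid graph `L_{2,m}` (0-indexed rows and columns). -/
def gridGraph (m : ℕ) : SimpleGraph (Fin 2 × Fin m) :=
  SimpleGraph.fromRel (fun a b =>
    (a.1 = b.1 ∧ (a.2 : ℕ) + 1 = (b.2 : ℕ)) ∨ (a.2 = b.2 ∧ (a.1 : ℕ) + 1 = (b.1 : ℕ)))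

instance (m : ℕ) : DecidableRel (gridGraph m).Adj := fun a b =>
  decidable_of_iff _ (SimpleGraph.fromRel_adj _ a b).symm

/-- The generalized Petersen graph `P(m,k)`; the vertex `(0, i)` is the outer vertex
`u_i` and `(1, i)` is the inner vertex `w_i` (0-indexed). -/
def petersen (m k : ℕ) : SimpleGraph (Fin 2 × Fin m) :=
  SimpleGraph.fromRel (fun a b =>
    (a.1 = 0 ∧ b.1 = 0 ∧ ((a.2 : ℕ) + 1) % m = (b.2 : ℕ)) ∨
    (a.1 = 0 ∧ b.1 = 1 ∧ a.2 = b.2) ∨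
    (a.1 = 1 ∧ b.1 = 1 ∧ ((a.2 : ℕ) + k) % m = (b.2 : ℕ)))

instance (m k : ℕ) : DecidableRel (petersen m k).Adj := fun a b =>
  decidable_of_iff _ (SimpleGraph.fromRel_adj _ a b).symm

/-- The position on `P(m,k)` where every outer vertex has weight 1 and every inner
vertex has weight 0. -/
def P01 (m : ℕ) : Fin 2 × Fin m → Bool := fun p => decide (p.1 = 0)

/-- The position on `P(m,k)` where every inner vertex has weight 1 and every outer
vertex has weight 0. -/
def P10 (m : ℕ) : Fin 2 × Fin m → Bool := fun p => decide (p.1 = 1)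

/-- The position where every vertex has weight 1. -/
def P11 (m : ℕ) : Fin 2 × Fin m → Bool := fun _ => true

/-- The Toggle position `H_m` on `L_{2,m}` (columns 0-indexed): for `m ≠ 3`, weight 0
exactly at `(0,0), (0,m-1), (1,0), (1,1), (1,m-2), (1,m-1)`; for `m = 3`, weight 0
exactly at `(0,0), (0,2), (1,0), (1,2)`. -/
def Hpos (m : ℕ) : Fin 2 × Fin m → Bool := fun p =>
  if m = 3 then !(decide ((p.2 : ℕ) = 0 ∨ (p.2 : ℕ) = 2))
  else !(decide ((p.1 = 0 ∧ ((p.2 : ℕ) = 0 ∨ (p.2 : ℕ) = m - 1)) ∨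
                 (p.1 = 1 ∧ ((p.2 : ℕ) ≤ 1 ∨ m - 2 ≤ (p.2 : ℕ)))))

/-- The Toggle position `D_m` on `L_{2,m}` (columns 0-indexed): weight 0 exactly at
`(0,0), (0,m-2), (0,m-1), (1,0), (1,1), (1,m-1)`. -/
def Dpos (m : ℕ) : Fin 2 × Fin m → Bool := fun p =>
  !(decide ((p.1 = 0 ∧ ((p.2 : ℕ) = 0 ∨ m - 2 ≤ (p.2 : ℕ))) ∨
            (p.1 = 1 ∧ ((p.2 : ℕ) ≤ 1 ∨ (p.2 : ℕ) = m - 1))))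

/-- The Nimber of the position `H_m`. -/
noncomputable def GH (m : ℕ) : ℕ := grundy (gridGraph m) (Hpos m)

/-- The Nimber of the position `D_m`. -/
noncomputable def GD (m : ℕ) : ℕ := grundy (gridGraph m) (Dpos m)

/-- The cycle graph `C_m` on `Fin m`. -/
def cycleGraph (m : ℕ) : SimpleGraph (Fin m) :=
  SimpleGraph.fromRel (fun a b => ((a : ℕ) + 1) % m = (b : ℕ))

open scoped Classical in
/-- The Nimber of a position of Jacob's Ladder on `C_m`: a position is the `Finset` of
not-yet-removed vertices, and a move at a remaining vertex `v` removes all remaining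
vertices at distance at most 2 from `v` in `C_m`. -/
noncomputable def jlGrundy (m : ℕ) (S : Finset (Fin m)) : ℕ :=
  mex (S.attach.image (fun v =>
    jlGrundy m (S.filter (fun u => 2 < (cycleGraph m).dist v.1 u))))
termination_by S.card
decreasing_by
  apply Finset.card_lt_card
  rw [Finset.ssubset_iff_of_subset (Finset.filter_subset _ _)]
  exact ⟨v.1, v.2, by simp [SimpleGraph.dist_self]⟩

end Toggle


namespace ToggleAux

/-- Forbidden-pattern invariant: no `1101`, `1011`, `110?11`. -/
def Kinv (w : ℤ → Bool) : Prop := ∀ i : ℤ,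
  (w i = true → w (i+1) = true → w (i+2) = false → w (i+3) = true → False) ∧
  (w i = true → w (i+1) = false → w (i+2) = true → w (i+3) = true → False) ∧
  (w i = true → w (i+1) = true → w (i+2) = false → w (i+4) = true → w (i+5) = true → False)

/-- Certificate that `v` is terminally unplayable. -/
def TUP (w : ℤ → Bool) (v : ℤ) : Prop :=
  (w v = true ∧ w (v-1) = false ∧ w (v+1) = false) ∨
  (w v = false ∧ ¬(w (v+1) = true ∧ w (v+2) = true) ∧ ¬(w (v-1) = true ∧ w (v-2) = true)) ∨
  (w v = false ∧ w (v-1) = false ∧ w (v+1) = true ∧ w (v+2) = true) ∨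
  (w v = false ∧ w (v+1) = false ∧ w (v-1) = true ∧ w (v-2) = true)

section Core

variable {w : ℤ → Bool}

lemma bcontra {f : ℤ → Bool} {X Y : ℤ} (hXY : X = Y) (h1 : f X = true) (h2 : f Y = false) :
    False := by subst hXY; rw [h1] at h2; exact Bool.noConfusion h2

lemma Ka (hK : Kinv w) {a b c d : ℤ} (hb : b = a + 1) (hc : c = a + 2) (hd : d = a + 3)
    (h1 : w a = true) (h2 : w b = true) (h3 : w c = false) (h4 : w d = true) : False := by
  subst hb hc hd; exact (hK a).1 h1 h2 h3 h4

lemma Kb (hK : Kinv w) {a b c d : ℤ} (hb : b = a + 1) (hc : c = a + 2) (hd : d = a + 3)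
    (h1 : w a = true) (h2 : w b = false) (h3 : w c = true) (h4 : w d = true) : False := by
  subst hb hc hd; exact (hK a).2.1 h1 h2 h3 h4

lemma Kc (hK : Kinv w) {a b c d e : ℤ} (hb : b = a + 1) (hc : c = a + 2) (hd : d = a + 4)
    (he : e = a + 5)
    (h1 : w a = true) (h2 : w b = true) (h3 : w c = false) (h4 : w d = true)
    (h5 : w e = true) : False := by
  subst hb hc hd he; exact (hK a).2.2 h1 h2 h3 h4 h5

lemma TUP_intro1 {v a b : ℤ} (ha : a = v - 1) (hb : b = v + 1)
    (h0 : w v = true) (h1 : w a = false) (h2 : w b = false) : TUP w v := by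
  subst ha hb; exact Or.inl ⟨h0, h1, h2⟩

lemma TUP_intro2 {v a b c d : ℤ} (ha : a = v + 1) (hb : b = v + 2) (hc : c = v - 1)
    (hd : d = v - 2) (h0 : w v = false) (h1 : ¬(w a = true ∧ w b = true))
    (h2 : ¬(w c = true ∧ w d = true)) : TUP w v := by
  subst ha hb hc hd; exact Or.inr (Or.inl ⟨h0, h1, h2⟩)

lemma TUP_intro3 {v a b c : ℤ} (ha : a = v - 1) (hb : b = v + 1) (hc : c = v + 2)
    (h0 : w v = false) (h1 : w a = false) (h2 : w b = true) (h3 : w c = true) : TUP w v := by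
  subst ha hb hc; exact Or.inr (Or.inr (Or.inl ⟨h0, h1, h2, h3⟩))

lemma TUP_intro4 {v a b c : ℤ} (ha : a = v + 1) (hb : b = v - 1) (hc : c = v - 2)
    (h0 : w v = false) (h1 : w a = false) (h2 : w b = true) (h3 : w c = true) : TUP w v := by
  subst ha hb hc; exact Or.inr (Or.inr (Or.inr ⟨h0, h1, h2, h3⟩))

lemma TUP_not_legal {v : ℤ} (h : TUP w v) :
    ¬(w v = true ∧ (w (v-1) = true ∨ w (v+1) = true)) := by
  rintro ⟨hv, hnb⟩
  rcases h with ⟨_, h1, h2⟩ | ⟨h0, _, _⟩ | ⟨h0, _⟩ | ⟨h0, _⟩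
  · rcases hnb with h | h
    · rw [h1] at h; exact Bool.noConfusion h
    · rw [h2] at h; exact Bool.noConfusion h
  all_goals rw [hv] at h0; exact Bool.noConfusion h0

variable {N u : ℤ} {w' : ℤ → Bool}
variable (hrange : ∀ i, w i = true → 0 ≤ i ∧ i < N)
variable (hm : ∀ i, w' i = if u - 1 ≤ i ∧ i ≤ u + 1 ∧ 0 ≤ i ∧ i < N then !w i else w i)
variable (hu : w u = true)
variable (hleg : w (u-1) = true ∨ w (u+1) = true)
variable (hK : Kinv w)

section Helpers

include hm

lemma hmid : ∀ i, (i < u - 1 ∨ u + 1 < i) → w' i = w i := by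
  intro i h; rw [hm i, if_neg (by omega)]

include hrange

include hu in
lemma hmu : w' u = false := by
  obtain ⟨h1, h2⟩ := hrange u hu
  rw [hm u, if_pos (by omega), hu]; rfl

lemma hwinT : ∀ i, u - 1 ≤ i → i ≤ u + 1 → w' i = true → w i = false ∧ 0 ≤ i ∧ i < N := by
  intro i h1 h2 h3
  rw [hm i] at h3
  by_cases hc : u - 1 ≤ i ∧ i ≤ u + 1 ∧ 0 ≤ i ∧ i < N
  · rw [if_pos hc] at h3; cases hwi : w i
    · exact ⟨rfl, hc.2.2⟩
    · rw [hwi] at h3; exact absurd h3 (by simp)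
  · rw [if_neg hc] at h3; exact absurd (hrange i h3) (by omega)

end Helpers

end Core

end ToggleAux

namespace ToggleAux

section Core2

variable {N u : ℤ} {w w' : ℤ → Bool}
variable (hrange : ∀ i, w i = true → 0 ≤ i ∧ i < N)
variable (hm : ∀ i, w' i = if u - 1 ≤ i ∧ i ≤ u + 1 ∧ 0 ≤ i ∧ i < N then !w i else w i)
variable (hu : w u = true)
variable (hleg : w (u-1) = true ∨ w (u+1) = true)
variable (hK : Kinv w)

include hrange hm hu hleg hK in
lemma Kpres : Kinv w' := by
  have Hmid := hmid hm
  have Hmu := hmu hrange hm hu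
  have HwT := hwinT hrange hm
  have HuN := hrange u hu
  intro i
  refine ⟨?_, ?_, ?_⟩
  · intro h0 h1 h2 h3
    rcases (by omega : (i ≤ u-5 ∨ u+2 ≤ i) ∨ i = u-4 ∨ i = u-3 ∨ i = u-2 ∨ i = u-1 ∨ i = u ∨ i = u+1) with hf | hc | hc | hc | hc | hc | hc
    · rw [Hmid i (by omega)] at h0
      rw [Hmid (i+1) (by omega)] at h1
      rw [Hmid (i+2) (by omega)] at h2
      rw [Hmid (i+3) (by omega)] at h3
      exact Ka hK rfl rfl rfl h0 h1 h2 h3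
    · obtain ⟨e3, -, -⟩ := HwT (i+3) (by omega) (by omega) h3
      rcases hleg with hL | hR
      · exact bcontra (show u-1 = i+3 by omega) hL e3
      · rw [Hmid i (by omega)] at h0
        rw [Hmid (i+1) (by omega)] at h1
        rw [Hmid (i+2) (by omega)] at h2
        exact Kc hK rfl rfl (by omega) (by omega) h0 h1 h2 hu hR
    · exact bcontra (show i+3 = u by omega) h3 Hmu
    · obtain ⟨e1, -, -⟩ := HwT (i+1) (by omega) (by omega) h1
      obtain ⟨e3, -, -⟩ := HwT (i+3) (by omega) (by omega) h3
      rcases hleg with hL | hR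
      · exact bcontra (show u-1 = i+1 by omega) hL e1
      · exact bcontra (show u+1 = i+3 by omega) hR e3
    · exact bcontra (show i+1 = u by omega) h1 Hmu
    · exact bcontra (show i = u by omega) h0 Hmu
    · obtain ⟨e0, -, -⟩ := HwT i (by omega) (by omega) h0
      rcases hleg with hL | hR
      · rw [Hmid (i+1) (by omega)] at h1
        exact Ka hK (by omega) (by omega) (by omega) hL hu e0 h1
      · exact bcontra (show u+1 = i by omega) hR e0
  · intro h0 h1 h2 h3
    rcases (by omega : (i ≤ u-5 ∨ u+2 ≤ i) ∨ i = u-4 ∨ i = u-3 ∨ i = u-2 ∨ i = u-1 ∨ i = u ∨ i = u+1) with hf | hc | hc | hc | hc | hc | hc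
    · rw [Hmid i (by omega)] at h0
      rw [Hmid (i+1) (by omega)] at h1
      rw [Hmid (i+2) (by omega)] at h2
      rw [Hmid (i+3) (by omega)] at h3
      exact Kb hK rfl rfl rfl h0 h1 h2 h3
    · obtain ⟨e3, -, -⟩ := HwT (i+3) (by omega) (by omega) h3
      rcases hleg with hL | hR
      · exact bcontra (show u-1 = i+3 by omega) hL e3
      · rw [Hmid (i+2) (by omega)] at h2
        exact Kb hK (by omega) (by omega) (by omega) h2 e3 hu hR
    · exact bcontra (show i+3 = u by omega) h3 Hmu
    · exact bcontra (show i+2 = u by omega) h2 Hmu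
    · obtain ⟨e0, -, -⟩ := HwT i (by omega) (by omega) h0
      obtain ⟨e2, -, -⟩ := HwT (i+2) (by omega) (by omega) h2
      rcases hleg with hL | hR
      · exact bcontra (show u-1 = i by omega) hL e0
      · exact bcontra (show u+1 = i+2 by omega) hR e2
    · exact bcontra (show i = u by omega) h0 Hmu
    · obtain ⟨e0, -, -⟩ := HwT i (by omega) (by omega) h0
      rcases hleg with hL | hR
      · rw [Hmid (i+2) (by omega)] at h2
        rw [Hmid (i+3) (by omega)] at h3
        exact Kc hK (by omega) (by omega) (by omega) (by omega) hL hu e0 h2 h3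
      · exact bcontra (show u+1 = i by omega) hR e0
  · intro h0 h1 h2 h4 h5
    rcases (by omega : (i ≤ u-7 ∨ u+2 ≤ i) ∨ i = u-6 ∨ i = u-5 ∨ i = u-4 ∨ i = u-3 ∨ i = u-2 ∨ i = u-1 ∨ i = u ∨ i = u+1) with hf | hc | hc | hc | hc | hc | hc | hc | hc
    · rw [Hmid i (by omega)] at h0
      rw [Hmid (i+1) (by omega)] at h1
      rw [Hmid (i+2) (by omega)] at h2
      rw [Hmid (i+4) (by omega)] at h4
      rw [Hmid (i+5) (by omega)] at h5
      exact Kc hK rfl rfl rfl rfl h0 h1 h2 h4 h5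
    · obtain ⟨e5, -, -⟩ := HwT (i+5) (by omega) (by omega) h5
      rcases hleg with hL | hR
      · exact bcontra (show u-1 = i+5 by omega) hL e5
      · rw [Hmid (i+4) (by omega)] at h4
        exact Kb hK (by omega) (by omega) (by omega) h4 e5 hu hR
    · exact bcontra (show i+5 = u by omega) h5 Hmu
    · exact bcontra (show i+4 = u by omega) h4 Hmu
    · obtain ⟨e4, -, -⟩ := HwT (i+4) (by omega) (by omega) h4
      rcases hleg with hL | hR
      · rw [Hmid (i+5) (by omega)] at h5
        exact Ka hK (by omega) (by omega) (by omega) hL hu e4 h5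
      · exact bcontra (show u+1 = i+4 by omega) hR e4
    · obtain ⟨e1, -, -⟩ := HwT (i+1) (by omega) (by omega) h1
      rcases hleg with hL | hR
      · exact bcontra (show u-1 = i+1 by omega) hL e1
      · rw [Hmid i (by omega)] at h0
        exact Kb hK (by omega) (by omega) (by omega) h0 e1 hu hR
    · exact bcontra (show i+1 = u by omega) h1 Hmu
    · exact bcontra (show i = u by omega) h0 Hmu
    · obtain ⟨e0, -, -⟩ := HwT i (by omega) (by omega) h0
      rcases hleg with hL | hR
      · rw [Hmid (i+1) (by omega)] at h1
        exact Ka hK (by omega) (by omega) (by omega) hL hu e0 h1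
      · exact bcontra (show u+1 = i by omega) hR e0

end Core2

end ToggleAux

namespace ToggleAux

section Core3

variable {N u v : ℤ} {w w' : ℤ → Bool}
variable (hrange : ∀ i, w i = true → 0 ≤ i ∧ i < N)
variable (hm : ∀ i, w' i = if u - 1 ≤ i ∧ i ≤ u + 1 ∧ 0 ≤ i ∧ i < N then !w i else w i)
variable (hu : w u = true)
variable (hleg : w (u-1) = true ∨ w (u+1) = true)
variable (hK : Kinv w)

include hrange hm hu hleg hK in
lemma P2 (hv : 0 ≤ v ∧ v < N) (hcase : v = u - 1 ∨ v = u ∨ v = u + 1) : TUP w' v := by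
  have Hmid := hmid hm
  have Hmu := hmu hrange hm hu
  have HwT := hwinT hrange hm
  have HuN := hrange u hu
  rcases hcase with hc | hc | hc
  · -- v = u - 1
    cases hb : w (u-1) with
    | true =>
      have hv' : w' v = false := by
        rw [hm v, if_pos (by omega)]; rw [show v = u-1 by omega, hb]; rfl
      by_cases hl : w' (u-2) = true ∧ w' (u-3) = true
      · exact TUP_intro4 (show u = v+1 by omega) (show u-2 = v-1 by omega)
          (show u-3 = v-2 by omega) hv' Hmu hl.1 hl.2
      · refine TUP_intro2 (show u = v+1 by omega) (show u+1 = v+2 by omega)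
          (show u-2 = v-1 by omega) (show u-3 = v-2 by omega) hv' ?_ hl
        rintro ⟨ha, -⟩; exact (bcontra rfl ha Hmu).elim
    | false =>
      rcases hleg with hL | hR
      · exact (bcontra rfl hL hb).elim
      · have hv' : w' v = true := by
          rw [hm v, if_pos (by omega)]; rw [show v = u-1 by omega, hb]; rfl
        have h2' : w (u-2) = false := by
          cases h : w (u-2) with
          | false => rfl
          | true => exact ((Kb hK (by omega) (by omega) (by omega) h hb hu hR)).elim
        exact TUP_intro1 (show u-2 = v-1 by omega) (show u = v+1 by omega) hv'
          (by rw [Hmid (u-2) (by omega)]; exact h2') Hmu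
  · -- v = u
    refine TUP_intro2 (show u+1 = v+1 by omega) (show u+2 = v+2 by omega)
      (show u-1 = v-1 by omega) (show u-2 = v-2 by omega) (by rw [hc]; exact Hmu) ?_ ?_
    · rintro ⟨ha, hb⟩
      obtain ⟨e1, -, -⟩ := HwT (u+1) (by omega) (by omega) ha
      rw [Hmid (u+2) (by omega)] at hb
      rcases hleg with hL | hR
      · exact Ka hK (by omega) (by omega) (by omega) hL hu e1 hb
      · exact bcontra rfl hR e1
    · rintro ⟨ha, hb⟩
      obtain ⟨e1, -, -⟩ := HwT (u-1) (by omega) (by omega) ha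
      rw [Hmid (u-2) (by omega)] at hb
      rcases hleg with hL | hR
      · exact bcontra rfl hL e1
      · exact Kb hK (by omega) (by omega) (by omega) hb e1 hu hR
  · -- v = u + 1
    cases hd : w (u+1) with
    | true =>
      have hrv := hrange (u+1) hd
      have hv' : w' v = false := by
        rw [hm v, if_pos (by omega)]; rw [show v = u+1 by omega, hd]; rfl
      by_cases hr : w' (u+2) = true ∧ w' (u+3) = true
      · exact TUP_intro3 (show u = v-1 by omega) (show u+2 = v+1 by omega)
          (show u+3 = v+2 by omega) hv' Hmu hr.1 hr.2
      · refine TUP_intro2 (show u+2 = v+1 by omega) (show u+3 = v+2 by omega)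
          (show u = v-1 by omega) (show u-1 = v-2 by omega) hv' hr ?_
        rintro ⟨ha, -⟩; exact (bcontra rfl ha Hmu).elim
    | false =>
      rcases hleg with hL | hR
      · have hv' : w' v = true := by
          rw [hm v, if_pos (by omega)]; rw [show v = u+1 by omega, hd]; rfl
        have h2' : w (u+2) = false := by
          cases h : w (u+2) with
          | false => rfl
          | true => exact ((Ka hK (by omega) (by omega) (by omega) hL hu hd h)).elim
        exact TUP_intro1 (show u = v-1 by omega) (show u+2 = v+1 by omega) hv' Hmu
          (by rw [Hmid (u+2) (by omega)]; exact h2')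
      · exact (bcontra rfl hR hd).elim

include hrange hm hu hleg hK in
lemma P1 (hv : 0 ≤ v ∧ v < N) (hT : TUP w v) : TUP w' v := by
  have Hmid := hmid hm
  have Hmu := hmu hrange hm hu
  have HwT := hwinT hrange hm
  have HuN := hrange u hu
  rcases hT with ⟨h0, h1, h2⟩ | ⟨h0, h1, h2⟩ | ⟨h0, h1, h2, h3⟩ | ⟨h0, h1, h2, h3⟩
  · -- Iso
    rcases (by omega : (u ≤ v-3 ∨ v+3 ≤ u) ∨ u = v-2 ∨ u = v-1 ∨ u = v ∨ u = v+1 ∨ u = v+2)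
      with hf | hc | hc | hc | hc | hc
    · exact TUP_intro1 rfl rfl (by rw [Hmid v (by omega)]; exact h0)
        (by rw [Hmid (v-1) (by omega)]; exact h1) (by rw [Hmid (v+1) (by omega)]; exact h2)
    · rcases hleg with hL | hR
      · exact (Ka hK (by omega) (by omega) (by omega) hL hu h1 h0).elim
      · exact (bcontra (show u+1 = v-1 by omega) hR h1).elim
    · exact (bcontra (show u = v-1 by omega) hu h1).elim
    · rcases hleg with hL | hR
      · exact (bcontra (show u-1 = v-1 by omega) hL h1).elim
      · exact (bcontra (show u+1 = v+1 by omega) hR h2).elim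
    · exact (bcontra (show u = v+1 by omega) hu h2).elim
    · rcases hleg with hL | hR
      · exact (bcontra (show u-1 = v+1 by omega) hL h2).elim
      · exact (Kb hK (by omega) (by omega) (by omega) h0 h2 hu hR).elim
  · -- Dead
    rcases (by omega : (u ≤ v-4 ∨ v+4 ≤ u) ∨ u = v-3 ∨ u = v-2 ∨ u = v-1 ∨ u = v ∨ u = v+1 ∨
        u = v+2 ∨ u = v+3) with hf | hc | hc | hc | hc | hc | hc | hc
    · refine TUP_intro2 rfl rfl rfl rfl (by rw [Hmid v (by omega)]; exact h0) ?_ ?_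
      · rw [Hmid (v+1) (by omega), Hmid (v+2) (by omega)]; exact h1
      · rw [Hmid (v-1) (by omega), Hmid (v-2) (by omega)]; exact h2
    · refine TUP_intro2 rfl rfl rfl rfl (by rw [Hmid v (by omega)]; exact h0) ?_ ?_
      · rw [Hmid (v+1) (by omega), Hmid (v+2) (by omega)]; exact h1
      · rintro ⟨ha, hb⟩
        rw [Hmid (v-1) (by omega)] at ha
        obtain ⟨e, -, -⟩ := HwT (v-2) (by omega) (by omega) hb
        rcases hleg with hL | hR
        · exact Ka hK (by omega) (by omega) (by omega) hL hu e ha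
        · exact bcontra (show u+1 = v-2 by omega) hR e
    · refine TUP_intro2 rfl rfl rfl rfl (by rw [Hmid v (by omega)]; exact h0) ?_ ?_
      · rw [Hmid (v+1) (by omega), Hmid (v+2) (by omega)]; exact h1
      · rintro ⟨-, hb⟩; exact bcontra (show v-2 = u by omega) hb Hmu
    · exfalso
      rcases hleg with hL | hR
      · exact h2 ⟨by rw [show v-1 = u by omega]; exact hu,
          by rw [show v-2 = u-1 by omega]; exact hL⟩
      · exact bcontra (show u+1 = v by omega) hR h0
    · exact (bcontra (show u = v by omega) hu h0).elim
    · exfalso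
      rcases hleg with hL | hR
      · exact bcontra (show u-1 = v by omega) hL h0
      · exact h1 ⟨by rw [show v+1 = u by omega]; exact hu,
          by rw [show v+2 = u+1 by omega]; exact hR⟩
    · refine TUP_intro2 rfl rfl rfl rfl (by rw [Hmid v (by omega)]; exact h0) ?_ ?_
      · rintro ⟨-, hb⟩; exact bcontra (show v+2 = u by omega) hb Hmu
      · rw [Hmid (v-1) (by omega), Hmid (v-2) (by omega)]; exact h2
    · refine TUP_intro2 rfl rfl rfl rfl (by rw [Hmid v (by omega)]; exact h0) ?_ ?_
      · rintro ⟨ha, hb⟩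
        rw [Hmid (v+1) (by omega)] at ha
        obtain ⟨e, -, -⟩ := HwT (v+2) (by omega) (by omega) hb
        rcases hleg with hL | hR
        · exact bcontra (show u-1 = v+2 by omega) hL e
        · exact Kb hK (by omega) (by omega) (by omega) ha e hu hR
      · rw [Hmid (v-1) (by omega), Hmid (v-2) (by omega)]; exact h2
  · -- BlockR
    rcases (by omega : (u ≤ v-3 ∨ v+4 ≤ u) ∨ u = v-2 ∨ u = v-1 ∨ u = v ∨ u = v+1 ∨ u = v+2 ∨
        u = v+3) with hf | hc | hc | hc | hc | hc | hc
    · exact TUP_intro3 rfl rfl rfl (by rw [Hmid v (by omega)]; exact h0)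
        (by rw [Hmid (v-1) (by omega)]; exact h1) (by rw [Hmid (v+1) (by omega)]; exact h2)
        (by rw [Hmid (v+2) (by omega)]; exact h3)
    · exfalso
      rcases hleg with hL | hR
      · exact Kc hK (by omega) (by omega) (by omega) (by omega) hL hu h1 h2 h3
      · exact bcontra (show u+1 = v-1 by omega) hR h1
    · exact (bcontra (show u = v-1 by omega) hu h1).elim
    · exact (bcontra (show u = v by omega) hu h0).elim
    · have hv' : w' v = true := by
        rw [hm v, if_pos (by omega)]; rw [h0]; rfl
      exact TUP_intro1 rfl (show u = v+1 by omega) hv'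
        (by rw [Hmid (v-1) (by omega)]; exact h1) Hmu
    · refine TUP_intro2 rfl rfl rfl rfl (by rw [Hmid v (by omega)]; exact h0) ?_ ?_
      · rintro ⟨-, hb⟩; exact bcontra (show v+2 = u by omega) hb Hmu
      · rintro ⟨ha, -⟩; rw [Hmid (v-1) (by omega)] at ha; exact bcontra rfl ha h1
    · refine TUP_intro2 rfl rfl rfl rfl (by rw [Hmid v (by omega)]; exact h0) ?_ ?_
      · rintro ⟨-, hb⟩
        obtain ⟨e, -, -⟩ := HwT (v+2) (by omega) (by omega) hb
        exact bcontra rfl h3 e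
      · rintro ⟨ha, -⟩; rw [Hmid (v-1) (by omega)] at ha; exact bcontra rfl ha h1
  · -- BlockL
    rcases (by omega : (u ≤ v-4 ∨ v+3 ≤ u) ∨ u = v-3 ∨ u = v-2 ∨ u = v-1 ∨ u = v ∨ u = v+1 ∨
        u = v+2) with hf | hc | hc | hc | hc | hc | hc
    · exact TUP_intro4 rfl rfl rfl (by rw [Hmid v (by omega)]; exact h0)
        (by rw [Hmid (v+1) (by omega)]; exact h1) (by rw [Hmid (v-1) (by omega)]; exact h2)
        (by rw [Hmid (v-2) (by omega)]; exact h3)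
    · refine TUP_intro2 rfl rfl rfl rfl (by rw [Hmid v (by omega)]; exact h0) ?_ ?_
      · rintro ⟨ha, -⟩; rw [Hmid (v+1) (by omega)] at ha; exact bcontra rfl ha h1
      · rintro ⟨-, hb⟩
        obtain ⟨e, -, -⟩ := HwT (v-2) (by omega) (by omega) hb
        exact bcontra rfl h3 e
    · refine TUP_intro2 rfl rfl rfl rfl (by rw [Hmid v (by omega)]; exact h0) ?_ ?_
      · rintro ⟨ha, -⟩; rw [Hmid (v+1) (by omega)] at ha; exact bcontra rfl ha h1
      · rintro ⟨-, hb⟩; exact bcontra (show v-2 = u by omega) hb Hmu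
    · have hv' : w' v = true := by
        rw [hm v, if_pos (by omega)]; rw [h0]; rfl
      exact TUP_intro1 (show u = v-1 by omega) rfl hv' Hmu
        (by rw [Hmid (v+1) (by omega)]; exact h1)
    · exact (bcontra (show u = v by omega) hu h0).elim
    · exact (bcontra (show u = v+1 by omega) hu h1).elim
    · exfalso
      rcases hleg with hL | hR
      · exact bcontra (show u-1 = v+1 by omega) hL h1
      · exact Kc hK (by omega) (by omega) (by omega) (by omega) h3 h2 h0 hu hR

end Core3

end ToggleAux

namespace ToggleAux

open Toggle

variable {n : ℕ}

/-- The weight word on `ℤ` associated to a position on `Fin n`. -/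
def Wf (n : ℕ) (ω : Fin n → Bool) : ℤ → Bool :=
  fun i => if h : 0 ≤ i ∧ i < (n:ℤ) then ω ⟨i.toNat, by omega⟩ else false

lemma Wf_range (ω : Fin n → Bool) : ∀ i, Wf n ω i = true → 0 ≤ i ∧ i < (n:ℤ) := by
  intro i h
  by_cases hc : 0 ≤ i ∧ i < (n:ℤ)
  · exact hc
  · rw [Wf, dif_neg hc] at h; exact Bool.noConfusion h

lemma Wf_pos (ω : Fin n → Bool) {i : ℤ} (hr : 0 ≤ i ∧ i < (n:ℤ)) :
    Wf n ω i = ω ⟨i.toNat, by omega⟩ := by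
  rw [Wf, dif_pos hr]

lemma Wf_coe (ω : Fin n → Bool) (x : Fin n) : Wf n ω (((x:ℕ):ℤ)) = ω x := by
  have hx : (0:ℤ) ≤ ((x:ℕ):ℤ) ∧ ((x:ℕ):ℤ) < (n:ℤ) :=
    ⟨Int.natCast_nonneg _, by exact_mod_cast x.isLt⟩
  rw [Wf_pos ω hx]
  exact congrArg ω (Fin.ext (by simp))

lemma mem_closedNbhd {V : Type*} [Fintype V] [DecidableEq V] {G : SimpleGraph V}
    [DecidableRel G.Adj] {x v : V} : x ∈ closedNbhd G v ↔ x = v ∨ G.Adj v x := by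
  simp [closedNbhd, SimpleGraph.mem_neighborFinset]

lemma path_adj {a b : Fin n} :
    (pathGraph n).Adj a b ↔ a ≠ b ∧ ((a:ℕ)+1 = (b:ℕ) ∨ (b:ℕ)+1 = (a:ℕ)) :=
  SimpleGraph.fromRel_adj _ a b

lemma filter_move {V : Type*} [Fintype V] [DecidableEq V] (G : SimpleGraph V)
    [DecidableRel G.Adj] (ω : V → Bool) (v : V) :
    (closedNbhd G v).filter (fun u => move G ω v u = true) =
      closedNbhd G v \ (closedNbhd G v).filter (fun u => ω u = true) := by
  rw [Finset.ext_iff]; intro y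
  rw [Finset.mem_filter, Finset.mem_sdiff, Finset.mem_filter]
  simp only [move]
  constructor
  · rintro ⟨hy, h2⟩
    rw [if_pos hy] at h2
    refine ⟨hy, ?_⟩
    rintro ⟨-, h3⟩
    rw [h3] at h2; exact Bool.noConfusion h2
  · rintro ⟨hy, h2⟩
    refine ⟨hy, ?_⟩
    rw [if_pos hy]
    cases h : ω y
    · rfl
    · exact absurd ⟨hy, h⟩ h2

lemma legal_nbhd (ω : Fin n → Bool) (v x : Fin n) (hadj : (pathGraph n).Adj v x)
    (h : IsLegal (pathGraph n) ω v) :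
    ∃ u : Fin n, (pathGraph n).Adj v u ∧ ω u = true := by
  by_contra hno
  push_neg at hno
  have hfil : (closedNbhd (pathGraph n) v).filter (fun u => ω u = true) = {v} := by
    ext y
    simp only [Finset.mem_filter, Finset.mem_singleton, mem_closedNbhd]
    constructor
    · rintro ⟨hy | hy, h2⟩
      · exact hy
      · exact absurd h2 (hno y hy)
    · rintro rfl; exact ⟨Or.inl rfl, h.1⟩
  have hW := h.2
  unfold nbhdWeight at hW
  rw [filter_move, hfil,
    Finset.card_sdiff_of_subset (Finset.singleton_subset_iff.mpr (mem_closedNbhd.mpr (Or.inl rfl)))] at hW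
  have hsub : ({v, x} : Finset (Fin n)) ⊆ closedNbhd (pathGraph n) v := by
    intro y hy
    rcases Finset.mem_insert.mp hy with rfl | hy
    · exact mem_closedNbhd.mpr (Or.inl rfl)
    · rw [Finset.mem_singleton] at hy
      subst hy; exact mem_closedNbhd.mpr (Or.inr hadj)
  have h2 : 2 ≤ (closedNbhd (pathGraph n) v).card := by
    calc 2 = ({v, x} : Finset (Fin n)).card := (Finset.card_pair hadj.ne).symm
    _ ≤ _ := Finset.card_le_card hsub
  simp only [Finset.card_singleton] at hW
  omega

lemma exists_adj (hn : 2 ≤ n) (v : Fin n) : ∃ x, (pathGraph n).Adj v x := by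
  by_cases hlt : (v:ℕ)+1 < n
  · refine ⟨⟨(v:ℕ)+1, hlt⟩, path_adj.mpr ⟨?_, Or.inl rfl⟩⟩
    intro hh
    have := congrArg Fin.val hh
    simp at this
  · have hvlt := v.isLt
    refine ⟨⟨(v:ℕ)-1, by omega⟩, path_adj.mpr ⟨?_, Or.inr (by simp; omega)⟩⟩
    intro hh
    have := congrArg Fin.val hh
    simp at this
    omega

lemma legal_W (hn : 2 ≤ n) {ω : Fin n → Bool} {v : Fin n}
    (h : IsLegal (pathGraph n) ω v) :
    Wf n ω ((v:ℕ):ℤ) = true ∧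
      (Wf n ω (((v:ℕ):ℤ)-1) = true ∨ Wf n ω (((v:ℕ):ℤ)+1) = true) := by
  obtain ⟨x, hx⟩ := exists_adj hn v
  obtain ⟨u, hadj, hu⟩ := legal_nbhd ω v x hx h
  refine ⟨by rw [Wf_coe]; exact h.1, ?_⟩
  rcases path_adj.mp hadj with ⟨-, hrel | hrel⟩
  · right
    rw [show ((v:ℕ):ℤ)+1 = ((u:ℕ):ℤ) by omega, Wf_coe]
    exact hu
  · left
    rw [show ((v:ℕ):ℤ)-1 = ((u:ℕ):ℤ) by omega, Wf_coe]
    exact hu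

lemma move_W (ω : Fin n → Bool) (v : Fin n) : ∀ i : ℤ,
    Wf n (move (pathGraph n) ω v) i =
      if ((v:ℕ):ℤ)-1 ≤ i ∧ i ≤ ((v:ℕ):ℤ)+1 ∧ 0 ≤ i ∧ i < (n:ℤ) then !(Wf n ω i)
      else Wf n ω i := by
  intro i
  by_cases hr : 0 ≤ i ∧ i < (n:ℤ)
  · have hx : i.toNat < n := by omega
    set x : Fin n := ⟨i.toNat, hx⟩ with hxdef
    have hxi : ((x:ℕ):ℤ) = i := by simp [hxdef]; omega
    have hmem : x ∈ closedNbhd (pathGraph n) v ↔ (((v:ℕ):ℤ)-1 ≤ i ∧ i ≤ ((v:ℕ):ℤ)+1) := by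
      rw [mem_closedNbhd]
      constructor
      · rintro (rfl | hadj)
        · omega
        · rcases path_adj.mp hadj with ⟨-, hrel | hrel⟩ <;> omega
      · intro hwin
        by_cases hxv : (x:ℕ) = (v:ℕ)
        · left; exact Fin.ext hxv
        · right
          refine path_adj.mpr ⟨fun hh => hxv (by rw [hh]), ?_⟩
          omega
    rw [Wf_pos _ hr, Wf_pos _ hr]
    show move (pathGraph n) ω v x = _
    rw [move]
    by_cases hw : ((v:ℕ):ℤ)-1 ≤ i ∧ i ≤ ((v:ℕ):ℤ)+1
    · rw [if_pos (hmem.mpr hw), if_pos ⟨hw.1, hw.2, hr.1, hr.2⟩]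
    · rw [if_neg (fun hmm => hw (hmem.mp hmm)), if_neg (by omega)]
  · rw [Wf, dif_neg hr, if_neg (by omega), Wf, dif_neg hr]

end ToggleAux

section Final

open Toggle ToggleAux

lemma Wf_init (n m1 m2 : ℕ) (h1 : 1 ≤ m1) (h2n : m2 ≤ n) :
    Wf n (fun i => decide (m1 ≤ (i:ℕ)+1 ∧ (i:ℕ)+1 ≤ m2)) =
      fun i : ℤ => decide ((m1:ℤ) ≤ i+1 ∧ i+1 ≤ (m2:ℤ)) := by
  funext i
  by_cases hr : 0 ≤ i ∧ i < (n:ℤ)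
  · rw [Wf_pos _ hr]
    simp only [decide_eq_decide]
    constructor <;> (intro; constructor <;> omega)
  · rw [Wf, dif_neg hr]
    symm
    simp only [decide_eq_false_iff_not]
    omega

lemma Kinv_init (m1 m2 : ℕ) :
    Kinv (fun i : ℤ => decide ((m1:ℤ) ≤ i+1 ∧ i+1 ≤ (m2:ℤ))) := by
  intro i
  refine ⟨?_, ?_, ?_⟩
  · intro ha hb hc hd
    simp only [decide_eq_true_eq, decide_eq_false_iff_not] at ha hb hc hd
    omega
  · intro ha hb hc hd
    simp only [decide_eq_true_eq, decide_eq_false_iff_not] at ha hb hc hd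
    omega
  · intro ha hb hc hd he
    simp only [decide_eq_true_eq, decide_eq_false_iff_not] at ha hb hc hd he
    omega

end Final

/-- the path `P_n` with vertices `v_1, …, v_n` (here `v_j` is the vertex
`j - 1 : Fin n`), with initial weight 1 exactly on `v_{m1}, …, v_{m2}` where
`1 ≤ m1 < m2 ≤ n`, is penultimately unplayable. -/
theorem statement2 (n m1 m2 : ℕ) (h1 : 1 ≤ m1) (h12 : m1 < m2) (h2n : m2 ≤ n) :
    Toggle.PenultimatelyUnplayable (Toggle.pathGraph n)
      (fun i => decide (m1 ≤ (i : ℕ) + 1 ∧ (i : ℕ) + 1 ≤ m2)) := by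
  have hn : 2 ≤ n := by omega
  intro v ω' hreach
  have hK0 : ToggleAux.Kinv (ToggleAux.Wf n (fun i : Fin n =>
      decide (m1 ≤ (i : ℕ) + 1 ∧ (i : ℕ) + 1 ≤ m2))) := by
    rw [Wf_init n m1 m2 h1 h2n]
    exact Kinv_init m1 m2
  have hK' : ToggleAux.Kinv (ToggleAux.Wf n ω') := by
    induction hreach with
    | refl => exact hK0
    | tail _ hstep ih =>
      obtain ⟨x, hl, rfl⟩ := hstep
      have hx := ToggleAux.legal_W hn hl
      exact ToggleAux.Kpres (ToggleAux.Wf_range _) (ToggleAux.move_W _ x) hx.1 hx.2 ih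
  intro u humem hlegal
  have hvb : (0:ℤ) ≤ ((v:ℕ):ℤ) ∧ ((v:ℕ):ℤ) < (n:ℤ) :=
    ⟨Int.natCast_nonneg _, by exact_mod_cast v.isLt⟩
  have hx := ToggleAux.legal_W hn hlegal
  have hcase : ((v:ℕ):ℤ) = ((u:ℕ):ℤ) - 1 ∨ ((v:ℕ):ℤ) = ((u:ℕ):ℤ) ∨
      ((v:ℕ):ℤ) = ((u:ℕ):ℤ) + 1 := by
    rcases ToggleAux.mem_closedNbhd.mp humem with rfl | hadj
    · omega
    · rcases ToggleAux.path_adj.mp hadj with ⟨-, hrel | hrel⟩ <;> omega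
  have hKm : ToggleAux.Kinv (ToggleAux.Wf n (Toggle.move (Toggle.pathGraph n) ω' u)) :=
    ToggleAux.Kpres (ToggleAux.Wf_range _) (ToggleAux.move_W _ u) hx.1 hx.2 hK'
  have hTm : ToggleAux.TUP (ToggleAux.Wf n (Toggle.move (Toggle.pathGraph n) ω' u))
      ((v:ℕ):ℤ) :=
    ToggleAux.P2 (ToggleAux.Wf_range _) (ToggleAux.move_W _ u) hx.1 hx.2 hK' hvb hcase
  intro ω'' hreach2
  have hinv : ToggleAux.Kinv (ToggleAux.Wf n ω'') ∧
      ToggleAux.TUP (ToggleAux.Wf n ω'') ((v:ℕ):ℤ) := by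
    induction hreach2 with
    | refl => exact ⟨hKm, hTm⟩
    | tail _ hstep ih =>
      obtain ⟨x, hl, rfl⟩ := hstep
      have hx2 := ToggleAux.legal_W hn hl
      exact ⟨ToggleAux.Kpres (ToggleAux.Wf_range _) (ToggleAux.move_W _ x) hx2.1 hx2.2 ih.1,
        ToggleAux.P1 (ToggleAux.Wf_range _) (ToggleAux.move_W _ x) hx2.1 hx2.2 ih.1 hvb ih.2⟩
  intro hlegal2
  have hx3 := ToggleAux.legal_W hn hlegal2
  exact ToggleAux.TUP_not_legal hinv.2 ⟨hx3.1, hx3.2⟩
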